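/- For two qubits, with Q = (I - X⊗X)/2, W = (I - Y⊗Y)/2, R = (I - Z⊗Z)/2, every product state ρ = ρ_1 ⊗ ρ_2 satisfies tr(ρ·(Q + W + R)/3) ≤ 2/3. -/

import Mathlib

open Matrix Kronecker ComplexOrder

noncomputable def PX : Matrix (Fin 2) (Fin 2) ℂ := !![0, 1; 1, 0]
noncomputable def PY : Matrix (Fin 2) (Fin 2) ℂ := !![0, -Complex.I; Complex.I, 0]
noncomputable def PZ : Matrix (Fin 2) (Fin 2) ℂ := !![1, 0; 0, -1]

/-- Projector onto the −1 outcome of `X⊗X`. -/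
noncomputable def Qop : Matrix (Fin 2 × Fin 2) (Fin 2 × Fin 2) ℂ :=
  ((1 : ℂ)/2) • ((1 : Matrix (Fin 2 × Fin 2) (Fin 2 × Fin 2) ℂ) - PX ⊗ₖ PX)

/-- Projector onto the −1 outcome of `Y⊗Y`. -/
noncomputable def Wop : Matrix (Fin 2 × Fin 2) (Fin 2 × Fin 2) ℂ :=
  ((1 : ℂ)/2) • ((1 : Matrix (Fin 2 × Fin 2) (Fin 2 × Fin 2) ℂ) - PY ⊗ₖ PY)

/-- Projector onto the −1 outcome of `Z⊗Z`. -/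
noncomputable def Rop : Matrix (Fin 2 × Fin 2) (Fin 2 × Fin 2) ℂ :=
  ((1 : ℂ)/2) • ((1 : Matrix (Fin 2 × Fin 2) (Fin 2 × Fin 2) ℂ) - PZ ⊗ₖ PZ)

/-- Basic facts about a single-qubit density matrix: real diagonal, Hermitian
off-diagonal, unit trace, and nonnegative determinant. -/
lemma qubit_facts (ρ : Matrix (Fin 2) (Fin 2) ℂ) (h : ρ.PosSemidef) (ht : ρ.trace = 1) :
    (ρ 0 0).im = 0 ∧ (ρ 1 1).im = 0 ∧ (ρ 1 0).re = (ρ 0 1).re ∧ (ρ 1 0).im = -(ρ 0 1).im ∧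
    (ρ 0 0).re + (ρ 1 1).re = 1 ∧
    (ρ 0 1).re^2 + (ρ 0 1).im^2 ≤ (ρ 0 0).re * (ρ 1 1).re := by
  have hH := h.1
  have e00 := hH.apply 0 0
  have e11 := hH.apply 1 1
  have e01 := hH.apply 1 0
  rw [Complex.ext_iff] at e00 e11 e01
  simp [Complex.conj_re, Complex.conj_im] at e00 e11 e01
  have htr : (ρ 0 0).re + (ρ 1 1).re = 1 ∧ (ρ 0 0).im + (ρ 1 1).im = 0 := by
    have : ρ.trace = ρ 0 0 + ρ 1 1 := by
      simp [Matrix.trace, Fin.sum_univ_two]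
    rw [this] at ht
    constructor
    · have := congrArg Complex.re ht; simpa using this
    · have := congrArg Complex.im ht; simpa using this
  have hq1 := h.dotProduct_mulVec_nonneg ![ρ 1 1, -(ρ 1 0)]
  have hq2 := h.dotProduct_mulVec_nonneg ![-(ρ 0 1), ρ 0 0]
  simp [dotProduct, Matrix.mulVec, Fin.sum_univ_two, Complex.le_def] at hq1 hq2
  obtain ⟨hq1r, -⟩ := hq1
  obtain ⟨hq2r, -⟩ := hq2
  have i00 : (ρ 0 0).im = 0 := by linarith [e00]
  have i11 : (ρ 1 1).im = 0 := by linarith [e11]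
  have r10 : (ρ 1 0).re = (ρ 0 1).re := e01.1.symm
  have i10 : (ρ 1 0).im = -(ρ 0 1).im := by linarith [e01.2]
  rw [i00, i11, r10, i10] at hq1r hq2r
  refine ⟨i00, i11, r10, i10, htr.1, ?_⟩
  nlinarith [hq1r, hq2r, htr.1]

/-- Every two-qubit product state satisfies `tr(ρ (Q+W+R)/3) ≤ 2/3`. -/
theorem product_state_witness_bound (ρ1 ρ2 : Matrix (Fin 2) (Fin 2) ℂ)
    (h1 : ρ1.PosSemidef) (ht1 : ρ1.trace = 1)
    (h2 : ρ2.PosSemidef) (ht2 : ρ2.trace = 1) :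
    (((ρ1 ⊗ₖ ρ2) * (((1 : ℂ)/3) • (Qop + Wop + Rop))).trace).re ≤ 2/3 := by
  obtain ⟨i00, i11, r10, i10, htr, hdet⟩ := qubit_facts ρ1 h1 ht1
  obtain ⟨j00, j11, s10, j10, htr', hdet'⟩ := qubit_facts ρ2 h2 ht2
  simp only [Qop, Wop, Rop, PX, PY, PZ, Matrix.trace, Matrix.mul_apply,
    Matrix.kroneckerMap_apply, Matrix.smul_apply, Matrix.add_apply, Matrix.sub_apply,
    Matrix.one_apply, Matrix.diag_apply, Fintype.sum_prod_type, Fin.sum_univ_two,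
    Matrix.cons_val', Matrix.cons_val_zero, Matrix.cons_val_one, Matrix.head_cons,
    Matrix.head_fin_const, Matrix.empty_val', Matrix.cons_val_fin_one]
  norm_num [Prod.ext_iff]
  rw [i00, i11, r10, i10, j00, j11, s10, j10]
  nlinarith [hdet, hdet', htr, htr',
    sq_nonneg ((ρ1 0 0).re - (ρ1 1 1).re + (ρ2 0 0).re - (ρ2 1 1).re),
    sq_nonneg ((ρ1 0 1).re + (ρ2 0 1).re), sq_nonneg ((ρ1 0 1).im + (ρ2 0 1).im),
    sq_nonneg ((ρ1 0 0).re - (ρ1 1 1).re - (ρ2 0 0).re + (ρ2 1 1).re),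
    sq_nonneg ((ρ1 0 1).re - (ρ2 0 1).re), sq_nonneg ((ρ1 0 1).im - (ρ2 0 1).im)]
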